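/- arXiv:2108.12389 — 3 statements merged into one kernel-verified Lean document; each statement's English description precedes it below -/
import Mathlib

section
/- Let k be a field and let p ∈ k[z] be a polynomial of degree at least 3. Suppose ℓ₁, ℓ₂, ℓ₃ ∈ k[x,y,z] are polynomials of total degree at most 1 and μ ∈ k* is such that ℓ₁·ℓ₂ − p(ℓ₃) = μ·(xy − p(z)) in k[x,y,z]. Then there exist a, b, c ∈ k* and d ∈ k with ab = μ, a·b·p(z) = p(cz + d), ℓ₃ = cz + d, and either (ℓ₁, ℓ₂) = (a·x, b·y) or (ℓ₁, ℓ₂) = (a·y, b·x). Consequently, every automorphism of the surface xy = p(z) that is the restriction of an affine automorphism of 𝔸³_k is of the form (x,y,z) ↦ (ax, by, cz+d) or (x,y,z) ↦ (ay, bx, cz+d) with a·b·p(z) = p(cz+d). -/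
open MvPolynomial

section DWAux
variable {k : Type} [Field k]


lemma mon_classify (m : Fin 3 →₀ ℕ) (h : m 0 + m 1 + m 2 ≤ 1) :
    m = 0 ∨ m = Finsupp.single 0 1 ∨ m = Finsupp.single 1 1 ∨ m = Finsupp.single 2 1 := by
  rcases Nat.lt_or_ge (m 0 + m 1 + m 2) 1 with h' | h'
  · left; ext j; fin_cases j <;> simp <;> omega
  · have : m 0 = 1 ∨ m 1 = 1 ∨ m 2 = 1 := by omega
    rcases this with h1 | h1 | h1
    · right; left
      ext j; fin_cases j <;> simp [Finsupp.single_apply] <;> omega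
    · right; right; left
      ext j; fin_cases j <;> simp [Finsupp.single_apply] <;> omega
    · right; right; right
      ext j; fin_cases j <;> simp [Finsupp.single_apply] <;> omega

lemma linear_structure (l : MvPolynomial (Fin 3) k) (h : l.totalDegree ≤ 1) :
    ∃ c₀ c₁ c₂ c₃ : k, l = C c₀ + C c₁ * X 0 + C c₂ * X 1 + C c₃ * X 2 := by
  refine ⟨coeff 0 l, coeff (Finsupp.single 0 1) l, coeff (Finsupp.single 1 1) l,
    coeff (Finsupp.single 2 1) l, ?_⟩
  apply MvPolynomial.ext
  intro m
  have hcases : m = 0 ∨ m = Finsupp.single 0 1 ∨ m = Finsupp.single 1 1 ∨ m = Finsupp.single 2 1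
      ∨ coeff m l = 0 := by
    by_cases hm : coeff m l = 0
    · right; right; right; right; exact hm
    · have hs : m ∈ l.support := by rwa [MvPolynomial.mem_support_iff]
      have := MvPolynomial.le_totalDegree hs
      have hsum : (m.sum fun _ e => e) = m 0 + m 1 + m 2 := by
        rw [Finsupp.sum_fintype]
        · simp [Fin.sum_univ_three]
        · intro; rfl
      have := mon_classify m (by omega)
      tauto
  have hx : ∀ i : Fin 3, (C (coeff (Finsupp.single i 1) l) * X i : MvPolynomial (Fin 3) k)
      = monomial (Finsupp.single i 1) (coeff (Finsupp.single i 1) l) := fun i =>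
    MvPolynomial.C_mul_X_eq_monomial
  rw [hx 0, hx 1, hx 2]
  simp only [MvPolynomial.coeff_add, MvPolynomial.coeff_monomial]
  rcases hcases with h' | h' | h' | h' | h'
  · simp [h']
  · simp [h', Finsupp.single_eq_single_iff, eq_comm, Finsupp.single_eq_zero]
  · simp [h', Finsupp.single_eq_single_iff, eq_comm, Finsupp.single_eq_zero]
  · simp [h', Finsupp.single_eq_single_iff, eq_comm, Finsupp.single_eq_zero]
  · split_ifs <;> simp_all

lemma DW_lin_mul (A B C' D : k) :
    (Polynomial.C A * Polynomial.X + Polynomial.C B) *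
      (Polynomial.C C' * Polynomial.X + Polynomial.C D)
    = Polynomial.C (A*C') * Polynomial.X^2 + Polynomial.C (A*D+B*C') * Polynomial.X
      + Polynomial.C (B*D) := by
  simp only [Polynomial.C_mul, Polynomial.C_add]; ring

lemma DW_quad_coeff2 (A B D : k) :
    (Polynomial.C A * Polynomial.X^2 + Polynomial.C B * Polynomial.X
      + Polynomial.C D).coeff 2 = A := by
  simp [Polynomial.coeff_X_pow]

lemma DW_quad_coeff1 (A B D : k) :
    (Polynomial.C A * Polynomial.X^2 + Polynomial.C B * Polynomial.X
      + Polynomial.C D).coeff 1 = B := by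
  simp [Polynomial.coeff_X_pow]

lemma DW_aeval_eq_comp (p r : Polynomial k) : Polynomial.aeval r p = p.comp r := by
  rw [Polynomial.aeval_def, Polynomial.comp, Polynomial.algebraMap_eq]

lemma DW_aeval_zero' (p : Polynomial k) :
    Polynomial.aeval (0 : Polynomial k) p = Polynomial.C (p.coeff 0) := by
  rw [Polynomial.aeval_def, Polynomial.eval₂_at_zero, Polynomial.algebraMap_eq]

lemma DW_aeval_lin (c₀ c₁ c₂ c₃ : k) (v : Fin 3 → Polynomial k) :
    MvPolynomial.aeval v (C c₀ + C c₁ * X 0 + C c₂ * X 1 + C c₃ * X 2)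
    = Polynomial.C c₀ + Polynomial.C c₁ * v 0 + Polynomial.C c₂ * v 1
      + Polynomial.C c₃ * v 2 := by
  simp [MvPolynomial.algebraMap_eq, Polynomial.algebraMap_eq]

lemma DW_aeval_lin3 (c₀ c₁ c₂ c₃ : k) (u v w : Polynomial k) :
    MvPolynomial.aeval ![u,v,w] (C c₀ + C c₁ * X 0 + C c₂ * X 1 + C c₃ * X 2)
    = Polynomial.C c₁ * u + Polynomial.C c₂ * v + Polynomial.C c₃ * w + Polynomial.C c₀ := by
  rw [DW_aeval_lin]; simp; ring

lemma DW_aeval_polyaeval (v : Fin 3 → Polynomial k) (x : MvPolynomial (Fin 3) k)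
    (q : Polynomial k) :
    MvPolynomial.aeval v (Polynomial.aeval x q) = Polynomial.aeval (MvPolynomial.aeval v x) q :=
  (Polynomial.aeval_algHom_apply (R := k) (A := MvPolynomial (Fin 3) k)
    (B := Polynomial k) (MvPolynomial.aeval v) x q).symm

lemma DW_specOrig (p : Polynomial k) (l1 l2 l3 : MvPolynomial (Fin 3) k) (μ : k)
    (heq : l1 * l2 - Polynomial.aeval l3 p
      = MvPolynomial.C μ * (X 0 * X 1 - Polynomial.aeval (X 2 : MvPolynomial (Fin 3) k) p))
    (u v w : Polynomial k) :
    (MvPolynomial.aeval ![u,v,w] l1) * (MvPolynomial.aeval ![u,v,w] l2)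
      - Polynomial.aeval (MvPolynomial.aeval ![u,v,w] l3) p
    = Polynomial.C μ * (u * v - Polynomial.aeval w p) := by
  have h := congrArg (MvPolynomial.aeval ![u,v,w]) heq
  simp only [map_sub, map_mul, DW_aeval_polyaeval, MvPolynomial.aeval_C,
    MvPolynomial.aeval_X, Polynomial.algebraMap_eq] at h
  simpa using h

lemma DW_key (p : Polynomial k) (hp : 3 ≤ p.natDegree)
    (l1 l2 l3 : MvPolynomial (Fin 3) k) (μ : k) (hμ : μ ≠ 0)
    (h1 : l1.totalDegree ≤ 1) (h2 : l2.totalDegree ≤ 1) (h3 : l3.totalDegree ≤ 1)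
    (heq : l1 * l2 - Polynomial.aeval l3 p
      = MvPolynomial.C μ * (X 0 * X 1 - Polynomial.aeval (X 2 : MvPolynomial (Fin 3) k) p)) :
    ∃ (a b c d : k), a ≠ 0 ∧ b ≠ 0 ∧ c ≠ 0 ∧ a * b = μ ∧
      Polynomial.C (a * b) * p = p.comp (Polynomial.C c * Polynomial.X + Polynomial.C d) ∧
      l3 = MvPolynomial.C c * X 2 + MvPolynomial.C d ∧
      ((l1 = MvPolynomial.C a * X 0 ∧ l2 = MvPolynomial.C b * X 1) ∨
       (l1 = MvPolynomial.C a * X 1 ∧ l2 = MvPolynomial.C b * X 0)) := by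
  obtain ⟨a0, a1, a2, a3, hl1⟩ := linear_structure l1 h1
  obtain ⟨b0, b1, b2, b3, hl2⟩ := linear_structure l2 h2
  obtain ⟨c0, c1, c2, c3, hl3⟩ := linear_structure l3 h3
  -- degree ≤ 1 facts for specialized linear polynomials
  have hlinle : ∀ s t : k, (Polynomial.C s * Polynomial.X + Polynomial.C t).natDegree ≤ 1 :=
    fun s t => Polynomial.natDegree_linear_le
  -- a generic contradiction maker: p ∘ (nonconstant linear) can't be a product of two linears
  have contra : ∀ (L1 L2 : Polynomial k) (e d1 : k), d1 ≠ 0 →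
      L1.natDegree ≤ 1 → L2.natDegree ≤ 1 →
      (L1 * L2 - p.comp (Polynomial.C d1 * Polynomial.X + Polynomial.C e)
        = Polynomial.C μ * (0 - Polynomial.C (p.coeff 0))) → False := by
    intro L1 L2 e d1 hd1 hL1 hL2 T
    have hcomp : p.comp (Polynomial.C d1 * Polynomial.X + Polynomial.C e)
        = L1 * L2 + Polynomial.C μ * Polynomial.C (p.coeff 0) := by linear_combination -T
    have h1d : (p.comp (Polynomial.C d1 * Polynomial.X + Polynomial.C e)).natDegree
        = p.natDegree := by
      rw [Polynomial.natDegree_comp, Polynomial.natDegree_linear hd1, mul_one]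
    have h2d : (L1 * L2 + Polynomial.C μ * Polynomial.C (p.coeff 0)).natDegree ≤ 2 := by
      refine le_trans (Polynomial.natDegree_add_le _ _) ?_
      have hm : (L1*L2).natDegree ≤ 2 :=
        le_trans (Polynomial.natDegree_mul_le) (by omega)
      have hc : (Polynomial.C μ * Polynomial.C (p.coeff 0)).natDegree = 0 := by
        rw [← Polynomial.C_mul, Polynomial.natDegree_C]
      omega
    rw [hcomp, h1d] at *
    omega
  -- Step 1 : c1 = 0
  have hc1 : c1 = 0 := by
    by_contra hc1
    have T := DW_specOrig p l1 l2 l3 μ heq Polynomial.X 0 0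
    rw [hl1, hl2, hl3, DW_aeval_lin3, DW_aeval_lin3, DW_aeval_lin3] at T
    simp only [mul_zero, add_zero, zero_add] at T
    rw [DW_aeval_eq_comp, DW_aeval_zero'] at T
    exact contra _ _ _ _ hc1 (hlinle a1 a0) (hlinle b1 b0) (by linear_combination T)
  -- Step 2 : c2 = 0
  have hc2 : c2 = 0 := by
    by_contra hc2
    have T := DW_specOrig p l1 l2 l3 μ heq 0 Polynomial.X 0
    rw [hl1, hl2, hl3, DW_aeval_lin3, DW_aeval_lin3, DW_aeval_lin3] at T
    simp only [mul_zero, add_zero, zero_add] at T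
    rw [DW_aeval_eq_comp, DW_aeval_zero'] at T
    exact contra _ _ _ _ hc2 (hlinle a2 a0) (hlinle b2 b0) (by linear_combination T)
  subst hc1; subst hc2
  simp only [map_zero, zero_mul, add_zero] at hl3
  -- Step 3 : the reduced equation
  set q : Polynomial k :=
    p.comp (Polynomial.C c3 * Polynomial.X + Polynomial.C c0) - Polynomial.C μ * p with hqdef
  have hl3' : l3 = Polynomial.aeval (X 2 : MvPolynomial (Fin 3) k)
      (Polynomial.C c3 * Polynomial.X + Polynomial.C c0) := by
    rw [hl3]
    simp [MvPolynomial.algebraMap_eq]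
    ring
  have En : l1 * l2 = MvPolynomial.C μ * (X 0 * X 1)
      + Polynomial.aeval (X 2 : MvPolynomial (Fin 3) k) q := by
    have h3' : Polynomial.aeval l3 p = Polynomial.aeval (X 2 : MvPolynomial (Fin 3) k)
        (p.comp (Polynomial.C c3 * Polynomial.X + Polynomial.C c0)) := by
      rw [hl3', Polynomial.aeval_comp]
    have hq2 : Polynomial.aeval (X 2 : MvPolynomial (Fin 3) k) q
        = Polynomial.aeval (X 2 : MvPolynomial (Fin 3) k)
            (p.comp (Polynomial.C c3 * Polynomial.X + Polynomial.C c0))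
          - MvPolynomial.C μ * Polynomial.aeval (X 2 : MvPolynomial (Fin 3) k) p := by
      rw [hqdef, map_sub, map_mul]
      simp [MvPolynomial.algebraMap_eq]
    rw [hq2, ← h3']
    linear_combination heq
  have spec2 : ∀ u v w : Polynomial k,
      (MvPolynomial.aeval ![u,v,w] l1) * (MvPolynomial.aeval ![u,v,w] l2)
      = Polynomial.C μ * (u * v) + Polynomial.aeval w q := by
    intro u v w
    have h := congrArg (MvPolynomial.aeval ![u,v,w]) En
    simp only [map_add, map_mul, DW_aeval_polyaeval, MvPolynomial.aeval_C,
      MvPolynomial.aeval_X, Polynomial.algebraMap_eq] at h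
    simpa using h
  -- the six specializations
  have S1 := spec2 Polynomial.X 0 0
  have S2 := spec2 0 Polynomial.X 0
  have S3 := spec2 Polynomial.X Polynomial.X 0
  have S6 := spec2 0 0 Polynomial.X
  have S4 := spec2 Polynomial.X 0 Polynomial.X
  have S5 := spec2 0 Polynomial.X Polynomial.X
  rw [hl1, hl2, DW_aeval_lin3, DW_aeval_lin3] at S1 S2 S3 S4 S5 S6
  simp only [mul_zero, add_zero, zero_add, zero_mul, DW_aeval_zero',
    Polynomial.aeval_X_left_apply] at S1 S2 S3 S4 S5 S6
  rw [DW_lin_mul] at S1 S2 S6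
  -- collect sums of X-terms
  have col : ∀ s t e : k, Polynomial.C s * Polynomial.X + Polynomial.C t * Polynomial.X
      + Polynomial.C e = Polynomial.C (s+t) * Polynomial.X + Polynomial.C e := by
    intro s t e; rw [Polynomial.C_add]; ring
  rw [col, col, DW_lin_mul] at S3
  rw [col, col, DW_lin_mul] at S4
  rw [col, col, DW_lin_mul] at S5
  have hXX : (Polynomial.X * Polynomial.X : Polynomial k) = Polynomial.X^2 := (sq _).symm
  rw [hXX] at S3
  -- scalar relations
  have r1 : a1 * b1 = 0 := by
    have h := congrArg (fun f => Polynomial.coeff f 2) S1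
    simpa only [DW_quad_coeff2, Polynomial.coeff_C, two_ne_zero, ↓reduceIte] using h
  have r2 : a1 * b0 + a0 * b1 = 0 := by
    have h := congrArg (fun f => Polynomial.coeff f 1) S1
    simpa only [DW_quad_coeff1, Polynomial.coeff_C, one_ne_zero, ↓reduceIte] using h
  have r3 : a2 * b2 = 0 := by
    have h := congrArg (fun f => Polynomial.coeff f 2) S2
    simpa only [DW_quad_coeff2, Polynomial.coeff_C, two_ne_zero, ↓reduceIte] using h
  have r4 : a2 * b0 + a0 * b2 = 0 := by
    have h := congrArg (fun f => Polynomial.coeff f 1) S2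
    simpa only [DW_quad_coeff1, Polynomial.coeff_C, one_ne_zero, ↓reduceIte] using h
  have r5 : (a1 + a2) * (b1 + b2) = μ := by
    have h := congrArg (fun f => Polynomial.coeff f 2) S3
    simp only [DW_quad_coeff2, Polynomial.coeff_add, Polynomial.coeff_C_mul,
      Polynomial.coeff_X_pow, Polynomial.coeff_C, Polynomial.coeff_X] at h
    norm_num at h
    linear_combination h
  have rq2 : q.coeff 2 = a3 * b3 := by rw [← S6, DW_quad_coeff2]
  have r6 : (a1 + a3) * (b1 + b3) = a3 * b3 := by
    have h := congrArg (fun f => Polynomial.coeff f 2) S4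
    simpa only [DW_quad_coeff2, rq2] using h
  have r7 : (a2 + a3) * (b2 + b3) = a3 * b3 := by
    have h := congrArg (fun f => Polynomial.coeff f 2) S5
    simpa only [DW_quad_coeff2, rq2] using h
  have r5' : a1 * b2 + a2 * b1 = μ := by linear_combination r5 - r1 - r3
  have r8 : a1 * b3 + a3 * b1 = 0 := by linear_combination r6 - r1
  have r9 : a2 * b3 + a3 * b2 = 0 := by linear_combination r7 - r3
  -- case split
  have hcase : a1 * b2 ≠ 0 ∨ a2 * b1 ≠ 0 := by
    by_contra hc
    push_neg at hc
    rw [hc.1, hc.2] at r5'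
    simp at r5'
    exact hμ r5'.symm
  have finish_q : a3 = 0 → a0 = 0 → q = 0 := by
    intro h h'
    rw [← S6, h, h']
    simp
  rcases hcase with hA | hB
  · have ha1 : a1 ≠ 0 := fun h => hA (by rw [h]; ring)
    have hb2 : b2 ≠ 0 := fun h => hA (by rw [h]; ring)
    have hb1 : b1 = 0 := (mul_eq_zero.1 r1).resolve_left ha1
    have ha2 : a2 = 0 := (mul_eq_zero.1 r3).resolve_right hb2
    have hb3 : b3 = 0 := by
      have h : a1 * b3 = 0 := by linear_combination r8 - a3 * hb1
      exact (mul_eq_zero.1 h).resolve_left ha1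
    have ha3 : a3 = 0 := by
      have h : a3 * b2 = 0 := by linear_combination r9 - b3 * ha2
      exact (mul_eq_zero.1 h).resolve_right hb2
    have hb0 : b0 = 0 := by
      have h : a1 * b0 = 0 := by linear_combination r2 - a0 * hb1
      exact (mul_eq_zero.1 h).resolve_left ha1
    have ha0 : a0 = 0 := by
      have h : a0 * b2 = 0 := by linear_combination r4 - b0 * ha2
      exact (mul_eq_zero.1 h).resolve_right hb2
    have hμ' : a1 * b2 = μ := by linear_combination r5' - b1 * ha2
    have hq0 : q = 0 := finish_q ha3 ha0
    have h0 : p.comp (Polynomial.C c3 * Polynomial.X + Polynomial.C c0)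
        - Polynomial.C μ * p = 0 := by rw [← hqdef]; exact hq0
    have hcomp : Polynomial.C (a1 * b2) * p
        = p.comp (Polynomial.C c3 * Polynomial.X + Polynomial.C c0) := by
      rw [hμ']; linear_combination -h0
    have hc3 : c3 ≠ 0 := by
      intro h
      rw [h] at hcomp
      have hC : (Polynomial.C (0:k) * Polynomial.X + Polynomial.C c0 : Polynomial k)
          = Polynomial.C c0 := by simp
      rw [hC, Polynomial.comp_C] at hcomp
      have hd := congrArg Polynomial.natDegree hcomp
      rw [Polynomial.natDegree_C, Polynomial.natDegree_C_mul hA] at hd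
      omega
    refine ⟨a1, b2, c3, c0, ha1, hb2, hc3, hμ', hcomp, ?_, Or.inl ⟨?_, ?_⟩⟩
    · rw [hl3]; ring
    · rw [hl1, ha0, ha2, ha3]; simp
    · rw [hl2, hb0, hb1, hb3]; simp
  · have ha2 : a2 ≠ 0 := fun h => hB (by rw [h]; ring)
    have hb1 : b1 ≠ 0 := fun h => hB (by rw [h]; ring)
    have hb2 : b2 = 0 := (mul_eq_zero.1 r3).resolve_left ha2
    have ha1 : a1 = 0 := (mul_eq_zero.1 r1).resolve_right hb1
    have hb3 : b3 = 0 := by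
      have h : a2 * b3 = 0 := by linear_combination r9 - a3 * hb2
      exact (mul_eq_zero.1 h).resolve_left ha2
    have ha3 : a3 = 0 := by
      have h : a3 * b1 = 0 := by linear_combination r8 - b3 * ha1
      exact (mul_eq_zero.1 h).resolve_right hb1
    have hb0 : b0 = 0 := by
      have h : a2 * b0 = 0 := by linear_combination r4 - a0 * hb2
      exact (mul_eq_zero.1 h).resolve_left ha2
    have ha0 : a0 = 0 := by
      have h : a0 * b1 = 0 := by linear_combination r2 - b0 * ha1
      exact (mul_eq_zero.1 h).resolve_right hb1
    have hμ' : a2 * b1 = μ := by linear_combination r5' - b2 * ha1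
    have hq0 : q = 0 := finish_q ha3 ha0
    have h0 : p.comp (Polynomial.C c3 * Polynomial.X + Polynomial.C c0)
        - Polynomial.C μ * p = 0 := by rw [← hqdef]; exact hq0
    have hcomp : Polynomial.C (a2 * b1) * p
        = p.comp (Polynomial.C c3 * Polynomial.X + Polynomial.C c0) := by
      rw [hμ']; linear_combination -h0
    have hc3 : c3 ≠ 0 := by
      intro h
      rw [h] at hcomp
      have hC : (Polynomial.C (0:k) * Polynomial.X + Polynomial.C c0 : Polynomial k)
          = Polynomial.C c0 := by simp
      rw [hC, Polynomial.comp_C] at hcomp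
      have hd := congrArg Polynomial.natDegree hcomp
      rw [Polynomial.natDegree_C, Polynomial.natDegree_C_mul hB] at hd
      omega
    refine ⟨a2, b1, c3, c0, ha2, hb1, hc3, hμ', hcomp, ?_, Or.inr ⟨?_, ?_⟩⟩
    · rw [hl3]; ring
    · rw [hl1, ha0, ha1, ha3]; simp
    · rw [hl2, hb0, hb2, hb3]; simp

end DWAux

/-- Affine automorphisms of the surface `xy = p(z)` for `deg p ≥ 3`: any factorisation
`ℓ₁ℓ₂ - p(ℓ₃) = μ(xy - p(z))` with `ℓᵢ` of degree at most one forces the standard form,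
and consequently every automorphism of the surface restricting an affine automorphism of
`𝔸³` is `(x,y,z) ↦ (ax, by, cz+d)` or `(x,y,z) ↦ (ay, bx, cz+d)` with `abp(z) = p(cz+d)`. -/
theorem affine_autos_of_Danielewski (k : Type) [Field k] (p : Polynomial k)
    (hp : 3 ≤ p.natDegree) :
    (∀ (l1 l2 l3 : MvPolynomial (Fin 3) k) (μ : k), μ ≠ 0 →
      l1.totalDegree ≤ 1 → l2.totalDegree ≤ 1 → l3.totalDegree ≤ 1 →
      l1 * l2 - Polynomial.aeval l3 p
        = MvPolynomial.C μ * (X 0 * X 1 - Polynomial.aeval (X 2) p) →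
      ∃ (a b c d : k), a ≠ 0 ∧ b ≠ 0 ∧ c ≠ 0 ∧ a * b = μ ∧
        Polynomial.C (a * b) * p = p.comp (Polynomial.C c * Polynomial.X + Polynomial.C d) ∧
        l3 = MvPolynomial.C c * X 2 + MvPolynomial.C d ∧
        ((l1 = MvPolynomial.C a * X 0 ∧ l2 = MvPolynomial.C b * X 1) ∨
         (l1 = MvPolynomial.C a * X 1 ∧ l2 = MvPolynomial.C b * X 0))) ∧
    (∀ (g : MvPolynomial (Fin 3) k ≃ₐ[k] MvPolynomial (Fin 3) k) (μ : k), μ ≠ 0 →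
      (∀ i : Fin 3, (g (X i)).totalDegree ≤ 1) →
      g (X 0 * X 1 - Polynomial.aeval (X 2) p)
        = MvPolynomial.C μ * (X 0 * X 1 - Polynomial.aeval (X 2) p) →
      ∃ (a b c d : k), a ≠ 0 ∧ b ≠ 0 ∧ c ≠ 0 ∧ a * b = μ ∧
        Polynomial.C (a * b) * p = p.comp (Polynomial.C c * Polynomial.X + Polynomial.C d) ∧
        g (X 2) = MvPolynomial.C c * X 2 + MvPolynomial.C d ∧
        ((g (X 0) = MvPolynomial.C a * X 0 ∧ g (X 1) = MvPolynomial.C b * X 1) ∨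
         (g (X 0) = MvPolynomial.C a * X 1 ∧ g (X 1) = MvPolynomial.C b * X 0))) := by
  constructor
  · intro l1 l2 l3 μ hμ h1 h2 h3 heq
    exact DW_key p hp l1 l2 l3 μ hμ h1 h2 h3 heq
  · intro g μ hμ hdeg hgeq
    have hg2 : g (Polynomial.aeval (X 2 : MvPolynomial (Fin 3) k) p)
        = Polynomial.aeval (g (X 2)) p :=
      (Polynomial.aeval_algHom_apply (R := k) (A := MvPolynomial (Fin 3) k)
        (B := MvPolynomial (Fin 3) k) g (X 2) p).symm
    have heq : g (X 0) * g (X 1) - Polynomial.aeval (g (X 2)) p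
        = MvPolynomial.C μ * (X 0 * X 1 - Polynomial.aeval (X 2 : MvPolynomial (Fin 3) k) p) := by
      rw [← map_mul, ← hg2, ← map_sub]
      exact hgeq
    exact DW_key p hp _ _ _ μ hμ (hdeg 0) (hdeg 1) (hdeg 2) heq
end

section
/- Let p ∈ ℂ[z] be a polynomial in reduced form which is not a monomial (i.e. p ≠ z^{deg p}). Then: (i) whenever c, λ ∈ ℂ* and b ∈ ℂ satisfy p(cz + b) = λ·p(z), one has b = 0; (ii) there exists an integer n ≥ 1 such that the set H = {c ∈ ℂ* : ∃ λ ∈ ℂ*, p(cz) = λ·p(z)} equals the group μ_n of n-th roots of unity (in particular H is a finite cyclic group); (iii) p is of the form p(z) = z^m·q(z^n) for some integer m ≥ 0 and some q ∈ ℂ[z] with q(0) ≠ 0. Moreover, whenever i, j are exponents with nonzero coefficients in p and c ∈ H, one has c^{i−j} = 1. -/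
open Polynomial

private lemma coeff_comp_C_mul_X' (p : Polynomial ℂ) (c : ℂ) (k : ℕ) :
    (p.comp (C c * X)).coeff k = c ^ k * p.coeff k := by
  induction p using Polynomial.induction_on' with
  | add p q hp hq => simp [add_comp, hp, hq, mul_add]
  | monomial n a =>
    rw [monomial_comp, mul_pow, ← C_pow, ← mul_assoc, ← C_mul, coeff_C_mul, coeff_X_pow,
      coeff_monomial]
    by_cases h : k = n
    · subst h
      simp [mul_comm]
    · rw [if_neg h, if_neg (Ne.symm h), mul_zero, mul_zero]

private lemma iterate_derivative_comp_linear' (p : Polynomial ℂ) (c b : ℂ) (k : ℕ) :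
    derivative^[k] (p.comp (C c * X + C b))
      = C (c ^ k) * (derivative^[k] p).comp (C c * X + C b) := by
  induction k with
  | zero => simp
  | succ k ih =>
    rw [Function.iterate_succ_apply', ih, derivative_C_mul, derivative_comp]
    have hlin : derivative (C c * X + C b) = C c := by
      simp
    rw [hlin, Function.iterate_succ_apply', pow_succ, C_mul]
    ring

/-- A polynomial is in reduced form if it is monic of degree `d ≥ 1` and its coefficient
in degree `d - 1` vanishes. -/
def ReducedFormC (p : Polynomial ℂ) : Prop :=
  p.Monic ∧ 1 ≤ p.natDegree ∧ p.coeff (p.natDegree - 1) = 0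

/-- Symmetries of a reduced non-monomial polynomial: any symmetry `p(cz+b) = λp(z)` has
`b = 0`, the group `H_p = {c : p(cz) = λp(z)}` equals `μ_n` for some `n ≥ 1`, and
`p = z^m q(z^n)` with `q(0) ≠ 0`; moreover `c^i = c^j` whenever `c ∈ H_p` and
`i, j` carry nonzero coefficients of `p`. -/
theorem symmetries_of_reduced_polynomial (p : Polynomial ℂ) (hred : ReducedFormC p)
    (hmon : p ≠ Polynomial.X ^ p.natDegree) :
    (∀ (c lam b : ℂ), c ≠ 0 → lam ≠ 0 →
      p.comp (Polynomial.C c * Polynomial.X + Polynomial.C b) = Polynomial.C lam * p →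
      b = 0) ∧
    ∃ n : ℕ, 1 ≤ n ∧
      ({c : ℂ | c ≠ 0 ∧ ∃ lam : ℂ, lam ≠ 0 ∧
          p.comp (Polynomial.C c * Polynomial.X) = Polynomial.C lam * p}
        = {c : ℂ | c ^ n = 1}) ∧
      (∃ (m : ℕ) (q : Polynomial ℂ), q.eval 0 ≠ 0 ∧
        p = Polynomial.X ^ m * q.comp (Polynomial.X ^ n)) ∧
      (∀ (i j : ℕ) (c : ℂ), p.coeff i ≠ 0 → p.coeff j ≠ 0 → c ^ n = 1 →
        c ^ i = c ^ j) := by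
  obtain ⟨hmonic, hd1, hc1⟩ := hred
  set d := p.natDegree with hd
  have hp0 : p ≠ 0 := hmonic.ne_zero
  have hmem : ∀ i : ℕ, p.coeff i ≠ 0 → i ≤ d := fun i h => le_natDegree_of_ne_zero h
  have hdmem : d ∈ p.support := by
    rw [mem_support_iff, hmonic.coeff_natDegree]; exact one_ne_zero
  have hex : ∃ i ∈ p.support, i ≠ d := by
    by_contra h
    push_neg at h
    apply hmon
    ext k
    rcases eq_or_ne k d with rfl | hk
    · simp [hmonic.coeff_natDegree, coeff_X_pow]; exact hmonic.coeff_natDegree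
    · have hk' : k ∉ p.support := fun hks => hk (h k hks)
      rw [notMem_support_iff] at hk'
      simp [hk', coeff_X_pow, hk]
  -- Part (i)
  have part1 : ∀ (c lam b : ℂ), c ≠ 0 → lam ≠ 0 →
      p.comp (C c * X + C b) = C lam * p → b = 0 := by
    intro c lam b hc hlam h
    set s : Polynomial ℂ := p - X ^ d with hs
    have hscoeff : ∀ m : ℕ, d - 1 ≤ m → s.coeff m = 0 := by
      intro m hm
      rw [hs, coeff_sub, coeff_X_pow]
      rcases eq_or_lt_of_le hm with hmd | hmd
      · rw [← hmd, hc1, if_neg (by omega)]; ring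
      · have hdm : d ≤ m := by omega
        rcases eq_or_lt_of_le hdm with heq | hlt
        · rw [← heq, hmonic.coeff_natDegree, if_pos rfl]; ring
        · rw [coeff_eq_zero_of_natDegree_lt hlt, if_neg (by omega)]; ring
    have hsne : s ≠ 0 := by
      intro h0
      exact hmon (sub_eq_zero.mp h0)
    have hsdeg : s.natDegree < d - 1 := by
      rw [natDegree_lt_iff_degree_lt hsne]
      exact (degree_lt_iff_coeff_zero s (d - 1)).mpr hscoeff
    have hDs : derivative^[d - 1] s = 0 := iterate_derivative_eq_zero hsdeg
    have hDp : derivative^[d - 1] p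
        = C ((d.descFactorial (d - 1) : ℕ) : ℂ) * X := by
      have h0 : derivative^[d - 1] p - derivative^[d - 1] (X ^ d : Polynomial ℂ) = 0 := by
        rw [← iterate_derivative_sub, ← hs, hDs]
      have h1 : derivative^[d - 1] p = derivative^[d - 1] (X ^ d : Polynomial ℂ) :=
        sub_eq_zero.mp h0
      rw [h1, iterate_derivative_X_pow_eq_C_mul, show d - (d - 1) = 1 by omega, pow_one]
    have h2 := congrArg (fun q => derivative^[d - 1] q) h
    simp only [iterate_derivative_comp_linear', iterate_derivative_C_mul, hDp] at h2
    have h3 := congrArg (Polynomial.eval 0) h2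
    simp only [eval_mul, eval_C, eval_comp, eval_add, eval_X, mul_zero, zero_add] at h3
    have hN : ((d.descFactorial (d - 1) : ℕ) : ℂ) ≠ 0 := by
      rw [Nat.cast_ne_zero, Ne, Nat.descFactorial_eq_zero_iff_lt]
      omega
    have hcp : c ^ (d - 1) ≠ 0 := pow_ne_zero _ hc
    rcases mul_eq_zero.mp h3 with h4 | h4
    · exact absurd h4 hcp
    · rcases mul_eq_zero.mp h4 with h5 | h5
      · exact absurd h5 hN
      · exact h5
  -- Part (ii) setup
  set n := p.support.gcd (fun i => d - i) with hn
  have hdvd : ∀ i ∈ p.support, n ∣ d - i := fun i hi => Finset.gcd_dvd hi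
  obtain ⟨i₀, hi₀s, hi₀d⟩ := hex
  have hi₀lt : i₀ < d := lt_of_le_of_ne (hmem i₀ (mem_support_iff.mp hi₀s)) hi₀d
  have hn1 : 1 ≤ n := by
    rcases Nat.eq_zero_or_pos n with h0 | h
    · have := Finset.gcd_eq_zero_iff.mp h0 i₀ hi₀s
      omega
    · exact h
  have keyA : ∀ c : ℂ, c ^ n = 1 → ∀ i ∈ p.support, c ^ i = c ^ d := by
    intro c hcn i hi
    obtain ⟨k, hk⟩ := hdvd i hi
    have hid : i ≤ d := hmem i (mem_support_iff.mp hi)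
    have h1 : c ^ d = c ^ i * c ^ (d - i) := by
      rw [← pow_add]; congr 1; omega
    rw [h1, hk, pow_mul, hcn, one_pow, mul_one]
  have hset : {c : ℂ | c ≠ 0 ∧ ∃ lam : ℂ, lam ≠ 0 ∧
      p.comp (C c * X) = C lam * p} = {c : ℂ | c ^ n = 1} := by
    ext c
    simp only [Set.mem_setOf_eq]
    constructor
    · rintro ⟨hc, lam, hlam, h⟩
      have hcoeff : ∀ k, c ^ k * p.coeff k = lam * p.coeff k := by
        intro k
        have := congrArg (fun q => Polynomial.coeff q k) h
        simp only [coeff_comp_C_mul_X', coeff_C_mul] at this; exact this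
      have hlamd : lam = c ^ d := by
        have := hcoeff d
        rw [hmonic.coeff_natDegree, mul_one, mul_one] at this
        exact this.symm
      have hone : ∀ i ∈ p.support, c ^ (d - i) = 1 := by
        intro i hi
        have hai := mem_support_iff.mp hi
        have h1 := hcoeff i
        rw [hlamd] at h1
        have h2 : c ^ i = c ^ d := mul_right_cancel₀ hai h1
        have hid : i ≤ d := hmem i hai
        have h3 : c ^ i * c ^ (d - i) = c ^ i * 1 := by
          rw [mul_one, ← pow_add, show i + (d - i) = d by omega]
          exact h2.symm
        exact mul_left_cancel₀ (pow_ne_zero i hc) h3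
      set u : ℂˣ := Units.mk0 c hc with hu
      have hdvd' : ∀ i ∈ p.support, orderOf u ∣ d - i := by
        intro i hi
        apply orderOf_dvd_of_pow_eq_one
        exact Units.ext (by simpa [hu] using hone i hi)
      have hord : orderOf u ∣ n := Finset.dvd_gcd hdvd'
      have hu1 : u ^ n = 1 := orderOf_dvd_iff_pow_eq_one.mp hord
      calc c ^ n = ((u ^ n : ℂˣ) : ℂ) := by simp [hu]
        _ = 1 := by rw [hu1]; simp
    · intro hcn
      have hc : c ≠ 0 := by
        intro h0
        rw [h0, zero_pow (by omega)] at hcn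
        exact zero_ne_one hcn
      refine ⟨hc, c ^ d, pow_ne_zero d hc, ?_⟩
      ext k
      rw [coeff_comp_C_mul_X', coeff_C_mul]
      by_cases hk : p.coeff k = 0
      · rw [hk, mul_zero, mul_zero]
      · rw [keyA c hcn k (mem_support_iff.mpr hk)]
  -- Part (iii)
  have hsupne : p.support.Nonempty := nonempty_support_iff.mpr hp0
  set m := p.support.min' hsupne with hm
  have hmmem : m ∈ p.support := p.support.min'_mem hsupne
  have hmle : ∀ i ∈ p.support, m ≤ i := fun i hi => p.support.min'_le i hi
  have hdvd2 : ∀ i ∈ p.support, n ∣ i - m := by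
    intro i hi
    have h1 := hdvd i hi
    have h2 := hdvd m hmmem
    have hid := hmem i (mem_support_iff.mp hi)
    have h3 := Nat.dvd_sub h2 h1
    rwa [show (d - m) - (d - i) = i - m by omega] at h3
  set q : Polynomial ℂ := ∑ i ∈ p.support, C (p.coeff i) * X ^ ((i - m) / n) with hq
  have hq0 : q.eval 0 ≠ 0 := by
    have heval : q.eval 0 = p.coeff m := by
      rw [hq, eval_finset_sum]
      rw [Finset.sum_eq_single m]
      · simp
      · intro i hi hne
        have h1 := hdvd2 i hi
        have h2 : m ≤ i := hmle i hi
        have h3 : n ≤ i - m := Nat.le_of_dvd (by omega) h1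
        have hpos : 0 < (i - m) / n := Nat.div_pos h3 (by omega)
        simp [zero_pow hpos.ne']
      · intro h; exact absurd hmmem h
    rw [heval]
    exact mem_support_iff.mp hmmem
  have hps : p = X ^ m * q.comp (X ^ n) := by
    rw [hq, sum_comp, Finset.mul_sum]
    conv_lhs => rw [p.as_sum_support]
    apply Finset.sum_congr rfl
    intro i hi
    rw [mul_comp, C_comp, X_pow_comp, ← pow_mul,
      Nat.mul_div_cancel' (hdvd2 i hi)]
    rw [show (X : Polynomial ℂ) ^ m * (C (p.coeff i) * X ^ (i - m))
        = C (p.coeff i) * X ^ (m + (i - m)) by rw [pow_add]; ring]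
    rw [show m + (i - m) = i from by have := hmle i hi; omega,
      C_mul_X_pow_eq_monomial]
  have part4 : ∀ (i j : ℕ) (c : ℂ), p.coeff i ≠ 0 → p.coeff j ≠ 0 → c ^ n = 1 →
      c ^ i = c ^ j := by
    intro i j c hi hj hcn
    rw [keyA c hcn i (mem_support_iff.mpr hi), keyA c hcn j (mem_support_iff.mpr hj)]
  exact ⟨part1, n, hn1, hset, ⟨m, q, hq0, hps⟩, part4⟩
end

section
/- There are exactly three conjugacy classes of elements of order 2 in GL₂(ℤ): every matrix M ∈ GL₂(ℤ) with M² = I and M ≠ I is conjugate in GL₂(ℤ) to exactly one of the three matrices σ₁ = [[1,0],[0,−1]], σ₂ = [[−1,0],[0,−1]], σ₃ = [[0,1],[1,0]], and these three matrices are pairwise non-conjugate in GL₂(ℤ). -/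
open Matrix

/-- Conjugacy in `GL₂(ℤ)`, expressed on integer matrices with unit determinant. -/
def GL2ZConj (M N : Matrix (Fin 2) (Fin 2) ℤ) : Prop :=
  ∃ P : Matrix (Fin 2) (Fin 2) ℤ, IsUnit P.det ∧ P * M * P⁻¹ = N

namespace GL2ZAux

abbrev Mat2 := Matrix (Fin 2) (Fin 2) ℤ

lemma conj_of (P Q A B : Mat2) (hPQ : P * Q = 1) (h : P * A * Q = B) : GL2ZConj A B := by
  refine ⟨P, ?_, ?_⟩
  · exact IsUnit.of_mul_eq_one (a := P.det) Q.det (by rw [← Matrix.det_mul, hPQ, Matrix.det_one])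
  · rw [Matrix.inv_eq_right_inv hPQ, h]

lemma conj_trans {A B C : Mat2} (h1 : GL2ZConj A B) (h2 : GL2ZConj B C) : GL2ZConj A C := by
  obtain ⟨P, hP, hPe⟩ := h1
  obtain ⟨R, hR, hRe⟩ := h2
  refine ⟨R * P, by rw [Matrix.det_mul]; exact hR.mul hP, ?_⟩
  rw [Matrix.mul_inv_rev, ← hRe, ← hPe]
  simp only [Matrix.mul_assoc]

lemma conj_symm {A B : Mat2} (h : GL2ZConj A B) : GL2ZConj B A := by
  obtain ⟨P, hP, hPe⟩ := h
  refine ⟨P⁻¹, (Matrix.isUnit_nonsing_inv_det P hP), ?_⟩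
  rw [Matrix.nonsing_inv_nonsing_inv P hP, ← hPe]
  rw [Matrix.mul_assoc, Matrix.mul_assoc, Matrix.nonsing_inv_mul _ hP, Matrix.mul_one,
    ← Matrix.mul_assoc, Matrix.nonsing_inv_mul _ hP, Matrix.one_mul]

lemma conj_commutes {A B : Mat2} (h : GL2ZConj A B) :
    ∃ P : Mat2, IsUnit P.det ∧ P * A = B * P := by
  obtain ⟨P, hP, hPe⟩ := h
  refine ⟨P, hP, ?_⟩
  rw [← hPe, Matrix.mul_assoc, Matrix.mul_assoc, Matrix.nonsing_inv_mul _ hP, Matrix.mul_one]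

lemma conj_det {A B : Mat2} (h : GL2ZConj A B) : A.det = B.det := by
  obtain ⟨P, hP, key⟩ := conj_commutes h
  have := congrArg Matrix.det key
  rw [Matrix.det_mul, Matrix.det_mul] at this
  exact mul_left_cancel₀ hP.ne_zero (by rw [this, mul_comm])

lemma not_conj_13 : ¬ GL2ZConj !![1, 0; 0, -1] !![0, 1; 1, 0] := by
  intro h
  obtain ⟨P, hP, key⟩ := conj_commutes h
  have h01 : P 0 0 = P 1 0 := by
    have := congrFun (congrFun key 0) 0
    simp [Matrix.mul_apply, Fin.sum_univ_two] at this
    linarith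
  have h11 : P 0 1 = -P 1 1 := by
    have := congrFun (congrFun key 0) 1
    simp [Matrix.mul_apply, Fin.sum_univ_two] at this
    linarith
  rw [Matrix.det_fin_two, Int.isUnit_iff] at hP
  rw [h01, h11] at hP
  rcases hP with h | h <;> ring_nf at h <;> omega

lemma classify_aux (a b c : ℤ) (h1 : a*a + b*c = 1) (hnz : ¬(b = 0 ∧ a = 1)) :
    GL2ZConj !![1, 0; 0, -1] !![a, b; c, -a] ∨ GL2ZConj !![0, 1; 1, 0] !![a, b; c, -a] := by
  set g : ℤ := (Int.gcd b (1-a) : ℤ) with hgdef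
  have hg0 : g ≠ 0 := by
    simp only [hgdef, ne_eq, Int.natCast_eq_zero, Int.gcd_eq_zero_iff]
    rintro ⟨hb, ha⟩
    exact hnz ⟨hb, by omega⟩
  set p : ℤ := Int.gcdA b (1-a) with hpdef
  set q : ℤ := Int.gcdB b (1-a) with hqdef
  have hbez : g = b * p + (1-a) * q := Int.gcd_eq_gcd_ab b (1-a)
  obtain ⟨v₁, hv₁⟩ : g ∣ b := Int.gcd_dvd_left b (1-a)
  obtain ⟨v₂, hv₂⟩ : g ∣ (1-a) := Int.gcd_dvd_right b (1-a)
  have h2 : v₁ * p + v₂ * q = 1 := by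
    apply mul_left_cancel₀ hg0
    rw [mul_one]
    linear_combination -hbez - p * hv₁ - q * hv₂
  have h3 : a * v₁ + b * v₂ = v₁ := by
    apply mul_left_cancel₀ hg0
    linear_combination (1 - a) * hv₁ - b * hv₂
  have h4 : c * v₁ - a * v₂ = v₂ := by
    apply mul_left_cancel₀ hg0
    linear_combination h1 - c * hv₁ + (a + 1) * hv₂
  have hQP : !![p, q; -v₂, v₁] * !![v₁, -q; v₂, p] = 1 := by
    ext i j
    fin_cases i <;> fin_cases j <;>
      simp [Matrix.mul_apply, Fin.sum_univ_two] <;> linarith [h2]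
  have hPQ : !![v₁, -q; v₂, p] * !![p, q; -v₂, v₁] = 1 := by
    ext i j
    fin_cases i <;> fin_cases j <;>
      simp [Matrix.mul_apply, Fin.sum_univ_two] <;> linarith [h2]
  have hkey : !![p, q; -v₂, v₁] * !![a, b; c, -a] * !![v₁, -q; v₂, p]
      = !![1, b * p^2 - 2*a*p*q - c*q^2; 0, -1] := by
    ext i j
    fin_cases i <;> fin_cases j <;>
      simp [Matrix.mul_apply, Fin.sum_univ_two]
    · linear_combination p * h3 + q * h4 + h2
    · ring
    · linear_combination v₁ * h4 - v₂ * h3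
    · linear_combination -q * h4 - p * h3 - h2
  set s : ℤ := b * p^2 - 2*a*p*q - c*q^2 with hsdef
  have hNM : GL2ZConj !![1, s; 0, -1] !![a, b; c, -a] := by
    apply conj_of !![v₁, -q; v₂, p] !![p, q; -v₂, v₁] _ _ hPQ
    rw [← hkey, show !![v₁, -q; v₂, p] * (!![p, q; -v₂, v₁] * !![a, b; c, -a] * !![v₁, -q; v₂, p])
        * !![p, q; -v₂, v₁] = (!![v₁, -q; v₂, p] * !![p, q; -v₂, v₁]) * !![a, b; c, -a] *
        (!![v₁, -q; v₂, p] * !![p, q; -v₂, v₁]) by simp only [Matrix.mul_assoc],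
      hPQ, Matrix.one_mul, Matrix.mul_one]
  rcases Int.even_or_odd s with ⟨t, ht⟩ | ⟨t, ht⟩
  · left
    refine conj_trans (conj_of !![1, -t; 0, 1] !![1, t; 0, 1] _ _ ?_ ?_) hNM
    · ext i j; fin_cases i <;> fin_cases j <;> simp [Matrix.mul_apply, Fin.sum_univ_two]
    · ext i j; fin_cases i <;> fin_cases j <;>
        simp [Matrix.mul_apply, Fin.sum_univ_two] <;> linarith [ht]
  · right
    refine conj_trans (conj_of !![1 + t, -t; -1, 1] !![1, t; 1, t + 1] _ _ ?_ ?_) hNM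
    · ext i j; fin_cases i <;> fin_cases j <;>
        simp [Matrix.mul_apply, Fin.sum_univ_two] <;> ring
    · ext i j; fin_cases i <;> fin_cases j <;>
        simp [Matrix.mul_apply, Fin.sum_univ_two] <;> linarith [ht]

lemma classify (a b c : ℤ) (h1 : a*a + b*c = 1) :
    GL2ZConj !![1, 0; 0, -1] !![a, b; c, -a] ∨ GL2ZConj !![0, 1; 1, 0] !![a, b; c, -a] := by
  by_cases hc : b = 0 ∧ a = 1
  · obtain ⟨hb, ha⟩ := hc
    subst hb ha
    have hswap : GL2ZConj !![(-1 : ℤ), c; 0, 1] !![1, 0; c, -1] := by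
      apply conj_of !![0, 1; 1, 0] !![0, 1; 1, 0]
      · ext i j; fin_cases i <;> fin_cases j <;> simp [Matrix.mul_apply, Fin.sum_univ_two]
      · ext i j; fin_cases i <;> fin_cases j <;> simp [Matrix.mul_apply, Fin.sum_univ_two]
    have := classify_aux (-1) c 0 (by ring) (by rintro ⟨-, h⟩; omega)
    have hm : !![(-1 : ℤ), c; 0, -(-1)] = !![(-1 : ℤ), c; 0, 1] := by norm_num
    rw [hm] at this
    rcases this with h | h
    · exact Or.inl (conj_trans h hswap)
    · exact Or.inr (conj_trans h hswap)
  · exact classify_aux a b c h1 hc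

end GL2ZAux

set_option maxHeartbeats 1000000 in
open GL2ZAux in
/-- There are exactly three conjugacy classes of elements of order 2 in `GL₂(ℤ)`,
represented by `[[1,0],[0,-1]]`, `[[-1,0],[0,-1]]` and `[[0,1],[1,0]]`. -/
theorem three_conjugacy_classes_of_involutions_GL2Z :
    (∀ M : Matrix (Fin 2) (Fin 2) ℤ, IsUnit M.det → M * M = 1 → M ≠ 1 →
      (GL2ZConj !![1, 0; 0, -1] M ∧ ¬GL2ZConj !![-1, 0; 0, -1] M ∧ ¬GL2ZConj !![0, 1; 1, 0] M) ∨
      (¬GL2ZConj !![1, 0; 0, -1] M ∧ GL2ZConj !![-1, 0; 0, -1] M ∧ ¬GL2ZConj !![0, 1; 1, 0] M) ∨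
      (¬GL2ZConj !![1, 0; 0, -1] M ∧ ¬GL2ZConj !![-1, 0; 0, -1] M ∧ GL2ZConj !![0, 1; 1, 0] M)) ∧
    ¬GL2ZConj !![1, 0; 0, -1] !![-1, 0; 0, -1] ∧
    ¬GL2ZConj !![1, 0; 0, -1] !![0, 1; 1, 0] ∧
    ¬GL2ZConj !![-1, 0; 0, -1] !![0, 1; 1, 0] := by
  have d1 : (!![1, 0; 0, -1] : Mat2).det = -1 := by simp [Matrix.det_fin_two_of]
  have d2 : (!![-1, 0; 0, -1] : Mat2).det = 1 := by simp [Matrix.det_fin_two_of]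
  have d3 : (!![0, 1; 1, 0] : Mat2).det = -1 := by simp [Matrix.det_fin_two_of]
  refine ⟨?_, ?_, not_conj_13, ?_⟩
  · intro M hdet hM2 hMne
    have e00 : M 0 0 * M 0 0 + M 0 1 * M 1 0 = 1 := by
      have := congrFun (congrFun hM2 0) 0
      simpa [Matrix.mul_apply, Fin.sum_univ_two] using this
    have e01 : M 0 0 * M 0 1 + M 0 1 * M 1 1 = 0 := by
      have := congrFun (congrFun hM2 0) 1
      simpa [Matrix.mul_apply, Fin.sum_univ_two] using this
    have e10 : M 1 0 * M 0 0 + M 1 1 * M 1 0 = 0 := by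
      have := congrFun (congrFun hM2 1) 0
      simpa [Matrix.mul_apply, Fin.sum_univ_two] using this
    have e11 : M 1 0 * M 0 1 + M 1 1 * M 1 1 = 1 := by
      have := congrFun (congrFun hM2 1) 1
      simpa [Matrix.mul_apply, Fin.sum_univ_two] using this
    have hdet2 : M.det = M 0 0 * M 1 1 - M 0 1 * M 1 0 := Matrix.det_fin_two M
    have hsq : M 1 1 = M 0 0 ∨ M 1 1 = -M 0 0 := by
      have : M 0 0 * M 0 0 = M 1 1 * M 1 1 := by linarith
      rcases mul_self_eq_mul_self_iff.mp this with h | h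
      · exact Or.inl h.symm
      · exact Or.inr (by linarith)
    rcases Int.isUnit_iff.mp hdet with hu | hu
    · -- det = 1 : M = -1
      rw [hdet2] at hu
      have hd : M 1 1 = M 0 0 := by
        rcases hsq with h | h
        · exact h
        · exfalso; rw [h] at hu; linarith
      rw [hd] at hu e01 e10
      have ha2 : M 0 0 * M 0 0 = 1 := by linarith
      rcases mul_self_eq_one_iff.mp ha2 with ha | ha <;> rw [ha] at e01 e10
      · exfalso
        apply hMne
        ext i j
        fin_cases i <;> fin_cases j <;>
          simp [Matrix.one_apply, ha, hd] <;> linarith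
      · refine Or.inr (Or.inl ⟨?_, ?_, ?_⟩)
        · intro h; have := conj_det h; rw [d1, hdet2, hd] at this; linarith
        · apply conj_of 1 1 _ _ (by simp)
          rw [Matrix.mul_one, Matrix.one_mul]
          ext i j
          fin_cases i <;> fin_cases j <;> simp [ha, hd] <;> linarith
        · intro h; have := conj_det h; rw [d3, hdet2, hd] at this; linarith
    · -- det = -1
      rw [hdet2] at hu
      have hd : M 1 1 = -M 0 0 := by
        rcases hsq with h | h
        · have h0 : M 0 0 = 0 := by
            rw [h] at hu
            exact mul_self_eq_zero.mp (by linarith)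
          rw [h, h0]; ring
        · exact h
      have hM : M = !![M 0 0, M 0 1; M 1 0, -M 0 0] := by
        ext i j
        fin_cases i <;> fin_cases j <;> simp [hd]
      have hn2 : ¬ GL2ZConj !![-1, 0; 0, -1] M := by
        intro h; have := conj_det h; rw [d2, hdet2, hd] at this; linarith
      rcases classify (M 0 0) (M 0 1) (M 1 0) e00 with h | h
      · rw [← hM] at h
        refine Or.inl ⟨h, hn2, fun h3 => not_conj_13 (conj_trans h (conj_symm h3))⟩
      · rw [← hM] at h
        exact Or.inr (Or.inr ⟨fun h1' => not_conj_13 (conj_trans h1' (conj_symm h)), hn2, h⟩)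
  · intro h; have := conj_det h; rw [d1, d2] at this; omega
  · intro h; have := conj_det h; rw [d2, d3] at this; omega
end
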